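/- Let R be an integral domain and let C_m(a,b) be an invertible n×n Christoffel matrix over R. Then its inverse is a Christoffel matrix over R of type m^{-1} mod n. -/

import Mathlib

/-- The `n × n` Christoffel matrix `C_m(a,b)`. -/
def christoffel (n m : ℕ) {R : Type*} (a b : R) : Matrix (Fin n) (Fin n) R :=
  Matrix.of fun i j =>
    if (((i : ℕ) : ZMod n) - (m : ZMod n) * ((j : ℕ) : ZMod n)).val < m then a else b

lemma aux_sum_reindex {R : Type*} [AddCommMonoid R] (n : ℕ) [NeZero n] (f : ZMod n → R) :
    ∑ k : Fin n, f ((k : ℕ) : ZMod n) = ∑ v : ZMod n, f v := by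
  apply Fintype.sum_bijective (fun k : Fin n => ((k : ℕ) : ZMod n)) ?_ _ _ (fun _ => rfl)
  rw [Fintype.bijective_iff_injective_and_card]
  refine ⟨fun x y h => ?_, by simp [ZMod.card]⟩
  have := congrArg ZMod.val h
  rw [ZMod.val_cast_of_lt x.isLt, ZMod.val_cast_of_lt y.isLt] at this
  exact Fin.ext this

lemma aux_card_val_lt (n c : ℕ) [NeZero n] (hc : c ≤ n) :
    (Finset.univ.filter (fun v : ZMod n => v.val < c)).card = c := by
  have : (Finset.univ.filter (fun v : ZMod n => v.val < c)).card = (Finset.range c).card := by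
    refine Finset.card_bij' (fun v _ => v.val) (fun x _ => (x : ZMod n)) ?_ ?_ ?_ ?_
    · intro v hv; simp at hv ⊢; exact hv
    · intro x hx; simp at hx ⊢; rwa [Nat.mod_eq_of_lt (lt_of_lt_of_le hx hc)]
    · intro v _; exact ZMod.natCast_rightInverse v
    · intro x hx; simp at hx ⊢; exact Nat.mod_eq_of_lt (lt_of_lt_of_le hx hc)
  simpa using this

lemma aux_card_comp {α : Type*} [Fintype α] (g : α → α) (hg : Function.Bijective g)
    (p : α → Prop) [DecidablePred p] :
    (Finset.univ.filter fun x => p (g x)).card = (Finset.univ.filter p).card := by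
  apply Finset.card_bij (fun x _ => g x)
  · intro x hx; simp at hx ⊢; exact hx
  · intro x _ y _ h; exact hg.1 h
  · intro y hy; simp at hy
    obtain ⟨x, rfl⟩ := hg.2 y
    exact ⟨x, by simpa using hy, rfl⟩

lemma aux_bij (n m : ℕ) [NeZero n] (hu : IsUnit ((m : ℕ) : ZMod n)) (T : ZMod n) :
    Function.Bijective (fun w : ZMod n => T - (m : ZMod n) * w) := by
  obtain ⟨u, hu⟩ := hu
  constructor
  · intro x y h
    have h2 : (m : ZMod n) * x = (m : ZMod n) * y := sub_right_injective h
    rw [← hu] at h2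
    exact (Units.mul_right_inj u).mp h2
  · intro v
    refine ⟨(u⁻¹ : (ZMod n)ˣ) * (T - v), ?_⟩
    show T - (m : ZMod n) * ((u⁻¹ : (ZMod n)ˣ) * (T - v)) = v
    rw [← hu, ← mul_assoc, Units.mul_inv, one_mul, sub_sub_cancel]

lemma aux_card_P (n m : ℕ) [NeZero n] (hmn : m ≤ n) (hu : IsUnit ((m : ℕ) : ZMod n))
    (T : ZMod n) :
    (Finset.univ.filter fun w : ZMod n => (T - (m : ZMod n) * w).val < m).card = m := by
  rw [aux_card_comp _ (aux_bij n m hu T) (fun v : ZMod n => v.val < m)]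
  exact aux_card_val_lt n m hmn

lemma aux_split {R : Type*} [CommRing R] (p q : Prop) [Decidable p] [Decidable q]
    (a b c d : R) :
    (if p then a else b) * (if q then c else d)
      = (a - b) * (c - d) * (if p ∧ q then 1 else 0)
        + (a - b) * d * (if p then 1 else 0)
        + b * (c - d) * (if q then 1 else 0) + b * d := by
  by_cases hp : p <;> by_cases hq : q <;> simp [hp, hq] <;> ring

lemma aux_sum_row {R : Type*} [CommRing R] (n m : ℕ) [NeZero n] (hmn : m ≤ n)
    (hu : IsUnit ((m : ℕ) : ZMod n)) (a b : R) (T : ZMod n) :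
    ∑ v : ZMod n, (if (T - (m : ZMod n) * v).val < m then a else b)
      = (m : R) * (a - b) + (n : R) * b := by
  have : ∀ v : ZMod n, (if (T - (m : ZMod n) * v).val < m then a else b)
      = (a - b) * (if (T - (m : ZMod n) * v).val < m then 1 else 0) + b := by
    intro v; by_cases h : (T - (m : ZMod n) * v).val < m <;> simp [h]
  rw [Finset.sum_congr rfl (fun v _ => this v), Finset.sum_add_distrib, ← Finset.mul_sum,
    Finset.sum_boole, Finset.sum_const, aux_card_P n m hmn hu T, Finset.card_univ, ZMod.card]
  ring

lemma aux_entry {R : Type*} [CommRing R] (n m m' : ℕ) [NeZero n] (hmn : m ≤ n) (hm'n : m' ≤ n)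
    (hu : IsUnit ((m : ℕ) : ZMod n))
    (hmm' : ((m : ℕ) : ZMod n) * ((m' : ℕ) : ZMod n) = 1)
    (a b c d : R) (i j : Fin n) :
    (christoffel n m a b * christoffel n m' c d) i j
      = (a - b) * (c - d) *
          ((Finset.univ.filter (fun w : ZMod n =>
            ((((((i : ℕ) : ZMod n) - ((j : ℕ) : ZMod n)).val : ℕ) : ZMod n)
              - ((m : ℕ) : ZMod n) * w).val < m ∧ w.val < m')).card : R)
        + (a - b) * d * (m : R) + b * (c - d) * (m' : R) + (n : R) * (b * d) := by
  set I : ZMod n := ((i : ℕ) : ZMod n) with hI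
  set J : ZMod n := ((j : ℕ) : ZMod n) with hJ
  set K : ZMod n := ((m' : ℕ) : ZMod n) * J with hK
  have hstep1 : (christoffel n m a b * christoffel n m' c d) i j
      = ∑ v : ZMod n, (if (I - ((m : ℕ) : ZMod n) * v).val < m then a else b)
          * (if (v - ((m' : ℕ) : ZMod n) * J).val < m' then c else d) := by
    rw [Matrix.mul_apply]
    simp only [christoffel, Matrix.of_apply]
    exact aux_sum_reindex n (fun v => (if (I - ((m : ℕ) : ZMod n) * v).val < m then a else b)
          * (if (v - ((m' : ℕ) : ZMod n) * J).val < m' then c else d))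
  have hTval : ((((I - J).val : ℕ)) : ZMod n) = I - J := ZMod.natCast_rightInverse _
  have hstep2 : ∑ v : ZMod n, (if (I - ((m : ℕ) : ZMod n) * v).val < m then a else b)
          * (if (v - ((m' : ℕ) : ZMod n) * J).val < m' then c else d)
      = ∑ w : ZMod n, (if ((((I - J).val : ℕ) : ZMod n) - ((m : ℕ) : ZMod n) * w).val < m then a else b)
          * (if w.val < m' then c else d) := by
    refine (Fintype.sum_bijective (fun w : ZMod n => w + K)
      (Equiv.addRight K).bijective _ _ (fun w => ?_)).symm
    congr 2
    · congr 1
      rw [hTval]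
      rw [hK, mul_add, ← mul_assoc, hmm', one_mul]
      ring
    · congr 1
      rw [hK, add_sub_cancel_right]
  rw [hstep1, hstep2]
  rw [Finset.sum_congr rfl (fun w _ => aux_split _ _ a b c d)]
  rw [Finset.sum_add_distrib, Finset.sum_add_distrib, Finset.sum_add_distrib,
    ← Finset.mul_sum, ← Finset.mul_sum, ← Finset.mul_sum,
    Finset.sum_boole, Finset.sum_boole, Finset.sum_boole, Finset.sum_const, Finset.card_univ, ZMod.card]
  have hP := aux_card_P n m hmn hu ((((I - J).val : ℕ)) : ZMod n)
  have hQ := aux_card_val_lt n m' hm'n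
  rw [hP, hQ]
  simp only [nsmul_eq_mul]


-- C3
lemma aux_count_range (n q t : ℕ) (hn : 0 < n) (ht : t < n) :
    ((Finset.range (q * n + 1)).filter (fun x => x % n = t)).card
      = q + if t = 0 then 1 else 0 := by
  set cnt := q + if t = 0 then 1 else 0 with hcnt
  have : ((Finset.range (q * n + 1)).filter (fun x => x % n = t)).card
      = (Finset.range cnt).card := by
    refine Finset.card_bij' (fun x _ => x / n) (fun i _ => t + i * n) ?_ ?_ ?_ ?_
    · intro x hx
      simp only [Finset.mem_filter, Finset.mem_range] at hx ⊢
      obtain ⟨hx1, hx2⟩ := hx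
      have hd := Nat.div_add_mod x n
      rcases Nat.eq_zero_or_pos t with h0 | h0
      · have : n * (x / n) ≤ q * n := by omega
        have : x / n ≤ q := by
          by_contra h
          push_neg at h
          have : n * (q+1) ≤ n * (x / n) := Nat.mul_le_mul_left n h
          nlinarith
        simp [hcnt, h0]; omega
      · have hne : ¬ (t = 0) := by omega
        simp only [hcnt, hne, if_false]
        have hxq : n * (x / n) < q * n := by omega
        by_contra h
        push_neg at h
        have : n * q ≤ n * (x / n) := Nat.mul_le_mul_left n (by omega)
        nlinarith
    · intro i hi
      simp only [Finset.mem_range] at hi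
      simp only [Finset.mem_filter, Finset.mem_range]
      constructor
      · rcases Nat.eq_zero_or_pos t with h0 | h0
        · simp [hcnt, h0] at hi; nlinarith
        · have hne : ¬ (t = 0) := by omega
          simp [hcnt, hne] at hi
          have : i * n + n ≤ q * n := by nlinarith
          omega
      · rw [Nat.add_mul_mod_self_right, Nat.mod_eq_of_lt ht]
    · intro x hx
      simp only [Finset.mem_filter, Finset.mem_range] at hx
      show t + x / n * n = x
      have hd := Nat.div_add_mod' x n
      omega
    · intro i _
      show (t + i * n) / n = i
      rw [Nat.add_mul_div_right _ _ hn, Nat.div_eq_of_lt ht, Nat.zero_add]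
  simpa using this

lemma aux_count (n m m' q t : ℕ) [NeZero n] (hm : 0 < m) (hmn : m < n) (hm'n : m' ≤ n)
    (hq : m * m' = q * n + 1) (ht : t < n) :
    (Finset.univ.filter (fun w : ZMod n =>
        ((t : ZMod n) - (m : ZMod n) * w).val < m ∧ w.val < m')).card
      = q + if t = 0 then 1 else 0 := by
  have hdivlt : ∀ x : ℕ, x < m * m' → x / m < m' := by
    intro x hx
    rw [Nat.div_lt_iff_lt_mul hm, Nat.mul_comm]
    exact hx
  have key : ∀ x : ℕ, x % n = t → ((t : ZMod n) - (m : ZMod n) * ((x / m : ℕ) : ZMod n)).val = x % m := by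
    intro x hx
    have h1 : ((x : ℕ) : ZMod n) = (t : ZMod n) := by
      rw [ZMod.natCast_eq_natCast_iff', hx, Nat.mod_eq_of_lt ht]
    have h2 : x = m * (x / m) + x % m := (Nat.div_add_mod x m).symm
    have h2' : ((x : ℕ) : ZMod n)
        = (m : ZMod n) * ((x / m : ℕ) : ZMod n) + ((x % m : ℕ) : ZMod n) := by
      conv_lhs => rw [h2]
      push_cast
      ring
    have h3 : (t : ZMod n) - (m : ZMod n) * ((x / m : ℕ) : ZMod n) = ((x % m : ℕ) : ZMod n) := by
      rw [← h1, h2']; ring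
    rw [h3, ZMod.val_cast_of_lt (lt_trans (Nat.mod_lt x hm) hmn)]
  have h12 : (Finset.univ.filter (fun w : ZMod n =>
        ((t : ZMod n) - (m : ZMod n) * w).val < m ∧ w.val < m')).card
      = ((Finset.range (m * m')).filter (fun x => x % n = t)).card := by
    refine Finset.card_bij'
      (fun w _ => m * w.val + ((t : ZMod n) - (m : ZMod n) * w).val)
      (fun x _ => ((x / m : ℕ) : ZMod n)) ?_ ?_ ?_ ?_
    · intro w hw
      simp only [Finset.mem_filter, Finset.mem_univ, true_and] at hw
      obtain ⟨h1, h2⟩ := hw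
      simp only [Finset.mem_filter, Finset.mem_range]
      constructor
      · calc m * w.val + ((t : ZMod n) - (m : ZMod n) * w).val
            < m * (w.val + 1) := by rw [Nat.mul_add, Nat.mul_one]; omega
          _ ≤ m * m' := Nat.mul_le_mul_left m (by omega)
      · have hcast : ((m * w.val + ((t : ZMod n) - (m : ZMod n) * w).val : ℕ) : ZMod n)
            = ((t : ℕ) : ZMod n) := by
          push_cast
          rw [ZMod.natCast_rightInverse w, ZMod.natCast_rightInverse ((t : ZMod n) - (m : ZMod n) * w)]
          ring
        rw [ZMod.natCast_eq_natCast_iff'] at hcast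
        rwa [Nat.mod_eq_of_lt ht] at hcast
    · intro x hx
      simp only [Finset.mem_filter, Finset.mem_range] at hx
      obtain ⟨hx1, hx2⟩ := hx
      simp only [Finset.mem_filter, Finset.mem_univ, true_and]
      refine ⟨?_, ?_⟩
      · rw [key x hx2]; exact Nat.mod_lt x hm
      · rw [ZMod.val_cast_of_lt (lt_of_lt_of_le (hdivlt x hx1) hm'n)]
        exact hdivlt x hx1
    · intro w hw
      simp only [Finset.mem_filter, Finset.mem_univ, true_and] at hw
      obtain ⟨h1, h2⟩ := hw
      show (((m * w.val + ((t : ZMod n) - (m : ZMod n) * w).val) / m : ℕ) : ZMod n) = w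
      rw [Nat.mul_add_div hm, Nat.div_eq_of_lt h1, Nat.add_zero]
      exact ZMod.natCast_rightInverse w
    · intro x hx
      simp only [Finset.mem_filter, Finset.mem_range] at hx
      obtain ⟨hx1, hx2⟩ := hx
      show m * (((x / m : ℕ) : ZMod n)).val + _ = x
      rw [ZMod.val_cast_of_lt (lt_of_lt_of_le (hdivlt x hx1) hm'n), key x hx2]
      exact Nat.div_add_mod x m
  rw [h12, hq, aux_count_range n q t (lt_of_le_of_lt (Nat.zero_le m) hmn) ht]


theorem christoffel_inverse (R : Type*) [CommRing R] [IsDomain R]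
    (n m : ℕ) (hn : 2 ≤ n) (hm : 1 ≤ m) (hm' : m < n) (hc : Nat.Coprime m n)
    (a b : R) (hab : a ≠ b)
    (hinv : IsUnit (christoffel n m a b).det) :
    ∃ c d : R, c ≠ d ∧
      (christoffel n m a b)⁻¹ = christoffel n (((m : ZMod n)⁻¹).val) c d := by
  haveI : NeZero n := ⟨by omega⟩
  set M := christoffel n m a b with hM
  set m' : ℕ := ((m : ZMod n)⁻¹).val with hm'def
  -- basic facts about m'
  have hu : IsUnit ((m : ℕ) : ZMod n) :=
    IsUnit.of_mul_eq_one _ (ZMod.coe_mul_inv_eq_one m hc)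
  have hmm' : ((m : ℕ) : ZMod n) * ((m' : ℕ) : ZMod n) = 1 := by
    rw [hm'def, ZMod.natCast_val, ZMod.cast_id]
    exact ZMod.coe_mul_inv_eq_one m hc
  have hm'lt : m' < n := ZMod.val_lt _
  have hmodd : (m * m') % n = 1 := by
    have h1 : (m * m') % n = 1 % n := by
      rw [← ZMod.natCast_eq_natCast_iff']
      push_cast
      rw [hmm']
    rwa [Nat.mod_eq_of_lt (show (1:ℕ) < n by omega)] at h1
  set q : ℕ := m * m' / n with hqdef
  have hq : m * m' = q * n + 1 := by
    have h := Nat.div_add_mod (m * m') n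
    have h2 : q * n = n * (m * m' / n) := by rw [hqdef, Nat.mul_comm]
    omega
  have hm'pos : 0 < m' := by
    rcases Nat.eq_zero_or_pos m' with h | h
    · rw [h, Nat.mul_zero] at hmodd; simp at hmodd
    · exact h
  -- the inverse matrix facts
  have hB : M⁻¹ * M = 1 := Matrix.nonsing_inv_mul M hinv
  -- IsUnit (a - b)
  have h01 : (0 : Fin n) ≠ (1 : Fin n) := by
    intro h
    have h2 : (0 : Fin n).val = (1 : Fin n).val := congrArg Fin.val h
    simp [Fin.val_zero, Fin.val_one'] at h2
    omega
  have hunit_ab : IsUnit (a - b) := by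
    set w : Fin n → R := fun i =>
      (if ((((i : ℕ) : ZMod n) - ((m : ℕ) : ZMod n) * (((0 : Fin n) : ℕ) : ZMod n)).val < m)
        then (1 : R) else 0)
      - (if ((((i : ℕ) : ZMod n) - ((m : ℕ) : ZMod n) * (((1 : Fin n) : ℕ) : ZMod n)).val < m)
        then (1 : R) else 0) with hw
    have hMx : Matrix.mulVec M (Pi.single (0 : Fin n) 1 - Pi.single (1 : Fin n) 1) = (a - b) • w := by
      rw [Matrix.mulVec_sub, Matrix.mulVec_single_one, Matrix.mulVec_single_one]
      funext i
      simp only [Pi.sub_apply, Pi.smul_apply, smul_eq_mul, mul_one, hw, hM, christoffel,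
        Matrix.of_apply, Matrix.col_apply]
      split_ifs <;> ring
    have heq : (Pi.single (0 : Fin n) 1 - Pi.single (1 : Fin n) 1 : Fin n → R)
        = (a - b) • (Matrix.mulVec M⁻¹ w) := by
      have h1 := congrArg (fun z => Matrix.mulVec M⁻¹ z) hMx
      rw [Matrix.mulVec_mulVec, hB, Matrix.one_mulVec, Matrix.mulVec_smul] at h1
      exact h1
    have h0 := congrFun heq 0
    simp only [Pi.sub_apply, Pi.single_eq_same, Pi.single_eq_of_ne h01, Pi.smul_apply,
      smul_eq_mul] at h0
    rw [sub_zero] at h0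
    exact IsUnit.of_mul_eq_one _ h0.symm
  -- row sums give the other unit
  have hrow : Matrix.mulVec M (fun _ => (1 : R)) = fun _ => (m : R) * (a - b) + (n : R) * b := by
    funext i
    have hstep : Matrix.mulVec M (fun _ => (1 : R)) i
        = ∑ k : Fin n, (if ((((i : ℕ) : ZMod n) - ((m : ℕ) : ZMod n) * (((k : ℕ)) : ZMod n)).val < m)
            then a else b) := by
      simp only [Matrix.mulVec, dotProduct, hM, christoffel, Matrix.of_apply, mul_one]
    rw [hstep,
      aux_sum_reindex n (fun v => if ((((i : ℕ) : ZMod n) - ((m : ℕ) : ZMod n) * v).val < m) then a else b),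
      aux_sum_row n m (le_of_lt hm') hu a b _]
  have hS : IsUnit ((m : R) * (a - b) + (n : R) * b) := by
    have h1 := congrArg (fun z => Matrix.mulVec M⁻¹ z) hrow
    rw [Matrix.mulVec_mulVec, hB, Matrix.one_mulVec] at h1
    have h2 : (fun _ : Fin n => (m : R) * (a - b) + (n : R) * b)
        = ((m : R) * (a - b) + (n : R) * b) • (fun _ : Fin n => (1 : R)) := by
      funext k; simp
    rw [h2, Matrix.mulVec_smul] at h1
    have h0 := congrFun h1 0
    simp only [Pi.smul_apply, smul_eq_mul] at h0
    exact IsUnit.of_mul_eq_one _ h0.symm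
  -- construct c and d
  obtain ⟨u, hu_ab⟩ := hunit_ab
  obtain ⟨s, hsS⟩ := hS
  set e : R := ((u⁻¹ : Rˣ) : R) with he
  have h1 : (a - b) * e = 1 := by rw [← hu_ab, he]; exact u.mul_inv
  set v : R := ((s⁻¹ : Rˣ) : R) with hv
  have h2 : ((m : R) * (a - b) + (n : R) * b) * v = 1 := by rw [← hsS, hv]; exact s.mul_inv
  set d : R := v * (-(q : R) - (m' : R) * b * e) with hd
  set c : R := d + e with hcdef
  have hcd : c - d = e := by rw [hcdef]; ring
  refine ⟨c, d, ?_, ?_⟩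
  · intro h
    have he0 : e = 0 := by
      have := h
      rw [hcdef] at this
      exact (add_eq_left).mp this
    rw [he0, mul_zero] at h1
    exact one_ne_zero h1.symm
  · apply Matrix.inv_eq_right_inv
    ext i j
    have hN := aux_count n m m' q ((((i : ℕ) : ZMod n) - ((j : ℕ) : ZMod n)).val)
      (by omega) hm' (le_of_lt hm'lt) hq (ZMod.val_lt _)
    rw [hM, aux_entry n m m' (le_of_lt hm') (le_of_lt hm'lt) hu hmm' a b c d i j, hN,
      Matrix.one_apply]
    have ht0 : ((((i : ℕ) : ZMod n) - ((j : ℕ) : ZMod n)).val = 0) ↔ i = j := by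
      rw [ZMod.val_eq_zero, sub_eq_zero]
      constructor
      · intro h
        have := congrArg ZMod.val h
        rw [ZMod.val_cast_of_lt i.isLt, ZMod.val_cast_of_lt j.isLt] at this
        exact Fin.ext this
      · intro h; rw [h]
    by_cases hij : i = j
    · rw [if_pos hij, if_pos (ht0.mpr hij)]
      rw [hcd, hd]
      push_cast
      linear_combination ((q : R) + 1) * h1 + (-(q : R) - (m' : R) * b * e) * h2
    · rw [if_neg hij, if_neg (fun h => hij (ht0.mp h))]
      rw [hcd, hd]
      push_cast
      linear_combination (q : R) * h1 + (-(q : R) - (m' : R) * b * e) * h2
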